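/- For every family of positive semidefinite input covariance matrices Σ_{1:L} and every real c ≥ 1, scaling all covariance matrices by c does not decrease any link rate: I_l(c·Σ_{1:L}, Φ) ≥ I_l(Σ_{1:L}, Φ) for every l = 1,…,L, where c·Σ_{1:L} = (cΣ_1,…,cΣ_L). -/

import Mathlib

open Matrix BigOperators
open scoped ComplexOrder

/-- Interference-plus-noise covariance `Ω_l = I + ∑ₖ Φ_{l,k} H_{l,k} Σ_k H_{l,k}ᴴ`
of link `l` in a B-MAC network. -/
noncomputable def interfCov {L : ℕ} (nT nR : Fin L → ℕ)
    (H : ∀ l k : Fin L, Matrix (Fin (nR l)) (Fin (nT k)) ℂ)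
    (Φ : Fin L → Fin L → ℝ)
    (S : ∀ l : Fin L, Matrix (Fin (nT l)) (Fin (nT l)) ℂ) (l : Fin L) :
    Matrix (Fin (nR l)) (Fin (nR l)) ℂ :=
  1 + ∑ k : Fin L, (Φ l k : ℂ) • (H l k * S k * (H l k)ᴴ)

/-- Achievable rate `I_l(Σ_{1:L}, Φ) = log det(I + H_{l,l} Σ_l H_{l,l}ᴴ Ω_l⁻¹)` of link `l`. -/
noncomputable def linkRate {L : ℕ} (nT nR : Fin L → ℕ)
    (H : ∀ l k : Fin L, Matrix (Fin (nR l)) (Fin (nT k)) ℂ)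
    (Φ : Fin L → Fin L → ℝ)
    (S : ∀ l : Fin L, Matrix (Fin (nT l)) (Fin (nT l)) ℂ) (l : Fin L) : ℝ :=
  Real.log ((1 + H l l * S l * (H l l)ᴴ * (interfCov nT nR H Φ S l)⁻¹).det.re)


section Aux

variable {n : Type*} [Fintype n] [DecidableEq n]

/-- det of 1 + PSD is a real number ≥ 1. -/
lemma det_one_add_psd {C : Matrix n n ℂ} (hC : C.PosSemidef) :
    ∃ r : ℝ, 1 ≤ r ∧ (1 + C).det = (r : ℂ) := by
  have hPD : (1 + C).PosDef := Matrix.PosDef.one.add_posSemidef hC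
  have hH : (1 + C).IsHermitian := hPD.isHermitian
  have key : ∀ i, 1 ≤ hH.eigenvalues i := by
    intro i
    rw [hH.eigenvalues_eq]
    have hexp : (1 + C) *ᵥ ⇑(hH.eigenvectorBasis i) =
        ⇑(hH.eigenvectorBasis i) + C *ᵥ ⇑(hH.eigenvectorBasis i) := by
      rw [Matrix.add_mulVec, Matrix.one_mulVec]
    rw [hexp, dotProduct_add, map_add]
    have h1 : Complex.re (star ⇑(hH.eigenvectorBasis i) ⬝ᵥ ⇑(hH.eigenvectorBasis i)) = 1 := by
      rw [dotProduct_comm, ← EuclideanSpace.inner_eq_star_dotProduct, inner_self_eq_norm_sq_to_K]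
      rw [hH.eigenvectorBasis.orthonormal.1 i]
      norm_num
    have h2 : 0 ≤ Complex.re (star ⇑(hH.eigenvectorBasis i) ⬝ᵥ (C *ᵥ ⇑(hH.eigenvectorBasis i))) :=
      hC.re_dotProduct_nonneg _
    change (1:ℝ) ≤ Complex.re _ + Complex.re _
    rw [h1]; linarith
  refine ⟨∏ i, hH.eigenvalues i, Finset.prod_le_prod (by intros; norm_num) (fun i _ => key i) |>.trans_eq' (by simp), ?_⟩
  rw [hH.det_eq_prod_eigenvalues]
  push_cast
  rfl

/-- Loewner antitonicity of the matrix inverse. -/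
lemma inv_antitone {P Q : Matrix n n ℂ} (hP : P.PosDef) (hQ : Q.PosDef)
    (h : (Q - P).PosSemidef) : (P⁻¹ - Q⁻¹).PosSemidef := by
  have hPdet : IsUnit P.det := hP.det_pos.ne'.isUnit
  have hQdet : IsUnit Q.det := hQ.det_pos.ne'.isUnit
  have hPP : P * P⁻¹ = 1 := Matrix.mul_nonsing_inv _ hPdet
  have hPP' : P⁻¹ * P = 1 := Matrix.nonsing_inv_mul _ hPdet
  have hQQ : Q * Q⁻¹ = 1 := Matrix.mul_nonsing_inv _ hQdet
  refine Matrix.PosSemidef.of_dotProduct_mulVec_nonneg (hP.inv.isHermitian.sub hQ.inv.isHermitian) fun x => ?_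
  set u : n → ℂ := Q⁻¹ *ᵥ x with hu
  set w : n → ℂ := u - P⁻¹ *ᵥ x with hw
  have h1 : 0 ≤ star w ⬝ᵥ (P *ᵥ w) := hP.posSemidef.dotProduct_mulVec_nonneg w
  have h2 : 0 ≤ star u ⬝ᵥ ((Q - P) *ᵥ u) := h.dotProduct_mulVec_nonneg u
  have e1 : P *ᵥ w = P *ᵥ u - x := by
    rw [hw, Matrix.mulVec_sub]
    congr 1
    rw [Matrix.mulVec_mulVec, hPP, Matrix.one_mulVec]
  have e2 : Q *ᵥ u = x := by rw [hu, Matrix.mulVec_mulVec, hQQ, Matrix.one_mulVec]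
  have hsu : star u ⬝ᵥ x = star x ⬝ᵥ (Q⁻¹ *ᵥ x) := by
    rw [hu, star_mulVec, ← Matrix.dotProduct_mulVec, hQ.inv.isHermitian.eq]
  have hsp : star (P⁻¹ *ᵥ x) ⬝ᵥ x = star x ⬝ᵥ (P⁻¹ *ᵥ x) := by
    rw [star_mulVec, ← Matrix.dotProduct_mulVec, hP.inv.isHermitian.eq]
  have hspu : star (P⁻¹ *ᵥ x) ⬝ᵥ (P *ᵥ u) = star x ⬝ᵥ (Q⁻¹ *ᵥ x) := by
    rw [star_mulVec, ← Matrix.dotProduct_mulVec, hP.inv.isHermitian.eq,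
      Matrix.mulVec_mulVec, hPP', Matrix.one_mulVec]
  have key : star x ⬝ᵥ ((P⁻¹ - Q⁻¹) *ᵥ x)
      = star w ⬝ᵥ (P *ᵥ w) + star u ⬝ᵥ ((Q - P) *ᵥ u) := by
    rw [Matrix.sub_mulVec, dotProduct_sub]
    rw [e1, hw, Matrix.sub_mulVec]
    simp only [star_sub, sub_dotProduct, dotProduct_sub, e2]
    rw [hsu, hsp, hspu]
    ring
  rw [key]
  exact add_nonneg h1 h2

/-- Adding a PSD matrix to `1 + PSD` does not decrease the (real) determinant. -/
lemma det_re_mono {B Δ : Matrix n n ℂ} (hB : B.PosSemidef) (hΔ : Δ.PosSemidef) :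
    (1 + B).det.re ≤ ((1 + B) + Δ).det.re := by
  set X : Matrix n n ℂ := 1 + B with hX
  have hXpd : X.PosDef := Matrix.PosDef.one.add_posSemidef hB
  have hXdet : IsUnit X.det := hXpd.det_pos.ne'.isUnit
  have hXinv : X⁻¹.PosDef := hXpd.inv
  open scoped MatrixOrder in
  set S : Matrix n n ℂ := CFC.sqrt X⁻¹ with hS
  open scoped MatrixOrder in
  have hSps : S.PosSemidef := (CFC.sqrt_nonneg X⁻¹).posSemidef
  open scoped MatrixOrder in
  have hSS : S * S = X⁻¹ := CFC.sqrt_mul_sqrt_self X⁻¹ hXinv.posSemidef.nonneg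
  have hfact : X + Δ = X * (1 + S * (S * Δ)) := by
    rw [Matrix.mul_add, mul_one]
    congr 1
    rw [← Matrix.mul_assoc, ← Matrix.mul_assoc, Matrix.mul_assoc X S S, hSS,
      Matrix.mul_nonsing_inv _ hXdet, Matrix.one_mul]
  have hdet2 : (1 + S * (S * Δ)).det = (1 + S * Δ * S).det := by
    rw [Matrix.det_one_add_mul_comm, Matrix.mul_assoc]
  have hC : (S * Δ * S).PosSemidef := by
    have := hΔ.mul_mul_conjTranspose_same S
    rwa [hSps.isHermitian.eq] at this
  obtain ⟨r1, hr1, hdet1⟩ := det_one_add_psd hB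
  obtain ⟨r2, hr2, hdet2'⟩ := det_one_add_psd hC
  have : (X + Δ).det = ((r1 * r2 : ℝ) : ℂ) := by
    rw [hfact, Matrix.det_mul, hdet2, hX, hdet1, hdet2']
    push_cast; ring
  rw [this, hX, hdet1]
  simp only [Complex.ofReal_re]
  nlinarith
end Aux

set_option maxHeartbeats 1600000 in
/-- Scaling all input covariance matrices by a common factor `c ≥ 1` does not
decrease any link rate in a B-MAC network. -/
theorem power_scaling_monotone {L : ℕ} (hL : 0 < L) (nT nR : Fin L → ℕ)
    (H : ∀ l k : Fin L, Matrix (Fin (nR l)) (Fin (nT k)) ℂ)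
    (Φ : Fin L → Fin L → ℝ)
    (hΦ01 : ∀ l k, Φ l k = 0 ∨ Φ l k = 1) (hΦdiag : ∀ l, Φ l l = 0)
    (S : ∀ l : Fin L, Matrix (Fin (nT l)) (Fin (nT l)) ℂ)
    (hS : ∀ l, (S l).PosSemidef)
    (c : ℝ) (hc : 1 ≤ c) :
    ∀ l : Fin L, linkRate nT nR H Φ S l ≤ linkRate nT nR H Φ (fun k => (c : ℂ) • S k) l := by
  intro l
  have hc0 : (0 : ℝ) < c := lt_of_lt_of_le one_pos hc
  have hcC : (c : ℂ) ≠ 0 := by exact_mod_cast hc0.ne'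
  simp only [linkRate, interfCov]
  set M : Matrix (Fin (nR l)) (Fin (nR l)) ℂ :=
    ∑ k, (Φ l k : ℂ) • (H l k * S k * (H l k)ᴴ) with hMdef
  have hM : M.PosSemidef := by
    apply Finset.sum_induction _ _ (fun a b (ha : a.PosSemidef) (hb : b.PosSemidef) => ha.add hb)
      Matrix.PosSemidef.zero
    intro k _
    rcases hΦ01 l k with h0 | h1
    · rw [h0]; simpa using Matrix.PosSemidef.zero
    · rw [h1]; simpa using (hS k).mul_mul_conjTranspose_same (H l k)
  set G : Matrix (Fin (nR l)) (Fin (nR l)) ℂ := H l l * S l * (H l l)ᴴ with hGdef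
  have hGps : G.PosSemidef := (hS l).mul_mul_conjTranspose_same (H l l)
  set Q : Matrix (Fin (nR l)) (Fin (nR l)) ℂ := 1 + M with hQdef
  set P : Matrix (Fin (nR l)) (Fin (nR l)) ℂ := ((c⁻¹ : ℝ) : ℂ) • 1 + M with hPdef
  have hQpd : Q.PosDef := Matrix.PosDef.one.add_posSemidef hM
  have hPpd : P.PosDef := by
    refine (Matrix.PosDef.add_posSemidef ?_ hM)
    rw [Matrix.smul_one_eq_diagonal]
    refine Matrix.PosDef.diagonal fun _ => ?_
    exact_mod_cast inv_pos.mpr hc0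
  have hQP : (Q - P).PosSemidef := by
    have hqp : Q - P = (((1 - c⁻¹ : ℝ)) : ℂ) • (1 : Matrix (Fin (nR l)) (Fin (nR l)) ℂ) := by
      rw [hQdef, hPdef]
      push_cast
      module
    rw [hqp, Matrix.smul_one_eq_diagonal]
    have hr : (0:ℝ) ≤ 1 - c⁻¹ := by
      have := inv_le_one_of_one_le₀ hc
      linarith
    have hnn : (0:ℂ) ≤ ((1 - c⁻¹ : ℝ) : ℂ) := by exact_mod_cast hr
    exact Matrix.PosSemidef.diagonal (by intro i; simpa using hnn)
  -- the scaled interference covariance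
  have hIC : (1 : Matrix (Fin (nR l)) (Fin (nR l)) ℂ) +
      ∑ k, (Φ l k : ℂ) • (H l k * ((c : ℂ) • S k) * (H l k)ᴴ) = (c : ℂ) • P := by
    have e : ∀ k : Fin L, (Φ l k : ℂ) • (H l k * ((c : ℂ) • S k) * (H l k)ᴴ)
        = (c : ℂ) • ((Φ l k : ℂ) • (H l k * S k * (H l k)ᴴ)) := by
      intro k
      rw [Matrix.mul_smul, Matrix.smul_mul, smul_comm]
    rw [Finset.sum_congr rfl fun k _ => e k, ← Finset.smul_sum, ← hMdef, hPdef, smul_add,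
      smul_smul]
    push_cast
    rw [mul_inv_cancel₀ hcC, one_smul]
  rw [hIC]
  have hPdet : IsUnit P.det := hPpd.det_pos.ne'.isUnit
  have hinv : ((c : ℂ) • P)⁻¹ = (c : ℂ)⁻¹ • P⁻¹ := by
    refine Matrix.inv_eq_right_inv ?_
    rw [Matrix.smul_mul, Matrix.mul_smul, smul_smul, mul_inv_cancel₀ hcC, one_smul,
      Matrix.mul_nonsing_inv _ hPdet]
  have h1 : H l l * ((c : ℂ) • S l) * (H l l)ᴴ = (c : ℂ) • G := by
    rw [Matrix.mul_smul, Matrix.smul_mul, hGdef]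
  have hmat : H l l * ((c : ℂ) • S l) * (H l l)ᴴ * ((c : ℂ) • P)⁻¹ = G * P⁻¹ := by
    rw [h1, hinv, Matrix.smul_mul, Matrix.mul_smul, smul_smul, mul_inv_cancel₀ hcC, one_smul]
  rw [hmat]
  -- now compare log det (1 + G * Q⁻¹) ≤ log det (1 + G * P⁻¹)
  open scoped MatrixOrder in
  set R : Matrix (Fin (nR l)) (Fin (nR l)) ℂ := CFC.sqrt G with hRdef
  open scoped MatrixOrder in
  have hRps : R.PosSemidef := (CFC.sqrt_nonneg G).posSemidef
  open scoped MatrixOrder in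
  have hRR : R * R = G := CFC.sqrt_mul_sqrt_self G hGps.nonneg
  have hBps : (R * Q⁻¹ * R).PosSemidef := by
    have := hQpd.inv.posSemidef.mul_mul_conjTranspose_same R
    rwa [hRps.isHermitian.eq] at this
  have hΔps : (R * (P⁻¹ - Q⁻¹) * R).PosSemidef := by
    have := (inv_antitone hPpd hQpd hQP).mul_mul_conjTranspose_same R
    rwa [hRps.isHermitian.eq] at this
  have hdQ : (1 + G * Q⁻¹).det = (1 + R * Q⁻¹ * R).det := by
    rw [← hRR, Matrix.mul_assoc R R _, Matrix.det_one_add_mul_comm, Matrix.mul_assoc]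
  have hdP : (1 + G * P⁻¹).det = (1 + R * P⁻¹ * R).det := by
    rw [← hRR, Matrix.mul_assoc R R _, Matrix.det_one_add_mul_comm, Matrix.mul_assoc]
  have hsplit : 1 + R * P⁻¹ * R = (1 + R * Q⁻¹ * R) + R * (P⁻¹ - Q⁻¹) * R := by
    rw [Matrix.mul_sub, Matrix.sub_mul]
    abel
  have hle : (1 + R * Q⁻¹ * R).det.re ≤ (1 + R * P⁻¹ * R).det.re := by
    rw [hsplit]
    exact det_re_mono hBps hΔps
  have hpos : 0 < (1 + R * Q⁻¹ * R).det.re := by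
    obtain ⟨r, hr, hd⟩ := det_one_add_psd hBps
    rw [hd, Complex.ofReal_re]
    linarith
  rw [hdQ, hdP]
  exact Real.log_le_log hpos hle
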